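/- Let ψ : ℝ≥0 → ℝ≥0 be non-decreasing and suppose ψ(y) ≤ b^{1/β} y^{1/β} for all y ≥ c, where b, β, c > 0. Define Φ(y) := ∫₀^y ψ(ζ) dζ. Then for all y, ξ ≥ 0: Φ(y + ξ) − Φ(y) ≤ (β/(β+1)) b^{1/β} [ (c + ξ)^{(β+1)/β} − c^{(β+1)/β} + (y + ξ)^{(β+1)/β} − y^{(β+1)/β} ]. -/

import Mathlib

open MeasureTheory

/-- Let `ψ : ℝ≥0 → ℝ≥0` be non-decreasing and suppose
`ψ y ≤ b^(1/β) * y^(1/β)` for all `y ≥ c`, where `b, β, c > 0`.  Define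
`Φ y := ∫ ζ in 0..y, ψ ζ`.  Then for all `y, ξ ≥ 0`:
`Φ (y+ξ) − Φ y ≤ (β/(β+1)) * b^(1/β) * ((c+ξ)^((β+1)/β) − c^((β+1)/β)
  + (y+ξ)^((β+1)/β) − y^((β+1)/β))`. -/
theorem stmt6 (ψ : ℝ → ℝ) (b β c : ℝ)
    (hb : 0 < b) (hβ : 0 < β) (hc : 0 < c)
    (hψ_nonneg : ∀ x, 0 ≤ x → 0 ≤ ψ x)
    (hψ_mono : MonotoneOn ψ (Set.Ici 0))
    (hψ_int : ∀ y : ℝ, 0 ≤ y → IntegrableOn ψ (Set.Icc 0 y))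
    (hψ_ub : ∀ y : ℝ, c ≤ y → ψ y ≤ b ^ (1 / β) * y ^ (1 / β))
    (Φ : ℝ → ℝ)
    (hΦ : ∀ y : ℝ, Φ y = ∫ ζ in (0:ℝ)..y, ψ ζ) :
    ∀ y ξ : ℝ, 0 ≤ y → 0 ≤ ξ →
      Φ (y + ξ) - Φ y ≤ (β / (β + 1)) * b ^ (1 / β) *
        ((c + ξ) ^ ((β + 1) / β) - c ^ ((β + 1) / β)
          + (y + ξ) ^ ((β + 1) / β) - y ^ ((β + 1) / β)) := by
  intro y ξ hy hξ
  have hp : 0 < 1 / β := by positivity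
  set p := 1 / β with hpdef
  have hB : 0 ≤ b ^ p := Real.rpow_nonneg hb.le p
  have hq : (β + 1) / β = p + 1 := by
    rw [hpdef]; field_simp; ring
  have hint1 : IntervalIntegrable ψ volume 0 y := by
    rw [intervalIntegrable_iff_integrableOn_Icc_of_le hy]
    exact hψ_int y hy
  have hint2 : IntervalIntegrable ψ volume y (y + ξ) := by
    rw [intervalIntegrable_iff_integrableOn_Icc_of_le (by linarith)]
    exact (hψ_int (y + ξ) (by linarith)).mono_set (Set.Icc_subset_Icc hy le_rfl)
  rw [hΦ, hΦ]
  have hsub : (∫ ζ in (0:ℝ)..(y + ξ), ψ ζ) - ∫ ζ in (0:ℝ)..y, ψ ζ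
      = ∫ ζ in y..(y + ξ), ψ ζ := by
    rw [← intervalIntegral.integral_add_adjacent_intervals hint1 hint2]; ring
  rw [hsub]
  set g : ℝ → ℝ := fun ζ => b ^ p * ((ζ + (c - y)) ^ p + ζ ^ p) with hg
  have hcont : Continuous g := by
    have h1 : Continuous fun ζ : ℝ => ζ ^ p := by
      rw [continuous_iff_continuousAt]
      intro x
      exact Real.continuousAt_rpow_const x p (Or.inr hp.le)
    exact continuous_const.mul ((h1.comp (continuous_id.add continuous_const)).add h1)
  have hgint : IntervalIntegrable g volume y (y + ξ) := hcont.intervalIntegrable y (y + ξ)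
  have hmono : ∫ ζ in y..(y + ξ), ψ ζ ≤ ∫ ζ in y..(y + ξ), g ζ := by
    apply intervalIntegral.integral_mono_on (by linarith) hint2 hgint
    intro ζ hζ
    obtain ⟨hζ1, hζ2⟩ := hζ
    have hζ0 : 0 ≤ ζ := le_trans hy hζ1
    have hbase : (0:ℝ) ≤ ζ + (c - y) := by linarith
    have hnn1 : 0 ≤ (ζ + (c - y)) ^ p := Real.rpow_nonneg hbase p
    have hnn2 : 0 ≤ ζ ^ p := Real.rpow_nonneg hζ0 p
    rcases le_or_gt c ζ with h | h
    · have := hψ_ub ζ h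
      rw [hg]
      calc ψ ζ ≤ b ^ p * ζ ^ p := this
        _ ≤ b ^ p * ((ζ + (c - y)) ^ p + ζ ^ p) := by nlinarith
    · have h1 : ψ ζ ≤ ψ c := hψ_mono hζ0 hc.le h.le
      have h2 : ψ c ≤ b ^ p * c ^ p := hψ_ub c le_rfl
      have h3 : c ^ p ≤ (ζ + (c - y)) ^ p :=
        Real.rpow_le_rpow hc.le (by linarith) hp.le
      rw [hg]
      calc ψ ζ ≤ b ^ p * c ^ p := le_trans h1 h2
        _ ≤ b ^ p * (ζ + (c - y)) ^ p := by nlinarith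
        _ ≤ b ^ p * ((ζ + (c - y)) ^ p + ζ ^ p) := by nlinarith
  have hI1 : (∫ ζ in y..(y + ξ), (ζ + (c - y)) ^ p)
      = ((c + ξ) ^ (p + 1) - c ^ (p + 1)) / (p + 1) := by
    have := intervalIntegral.integral_comp_add_right (a := y) (b := y + ξ)
      (fun x : ℝ => x ^ p) (c - y)
    rw [this]
    have e1 : y + (c - y) = c := by ring
    have e2 : y + ξ + (c - y) = c + ξ := by ring
    rw [e1, e2]
    exact integral_rpow (Or.inl (by linarith))
  have hI2 : (∫ ζ in y..(y + ξ), ζ ^ p)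
      = ((y + ξ) ^ (p + 1) - y ^ (p + 1)) / (p + 1) :=
    integral_rpow (Or.inl (by linarith))
  have hgcalc : (∫ ζ in y..(y + ξ), g ζ)
      = β / (β + 1) * b ^ p *
        ((c + ξ) ^ ((β + 1) / β) - c ^ ((β + 1) / β)
          + (y + ξ) ^ ((β + 1) / β) - y ^ ((β + 1) / β)) := by
    have i1 : IntervalIntegrable (fun ζ : ℝ => (ζ + (c - y)) ^ p) volume y (y + ξ) := by
      apply Continuous.intervalIntegrable
      rw [continuous_iff_continuousAt]
      intro x
      exact (Real.continuousAt_rpow_const _ p (Or.inr hp.le)).comp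
        (continuousAt_id.add continuousAt_const)
    have i2 : IntervalIntegrable (fun ζ : ℝ => ζ ^ p) volume y (y + ξ) := by
      apply Continuous.intervalIntegrable
      rw [continuous_iff_continuousAt]
      intro x
      exact Real.continuousAt_rpow_const x p (Or.inr hp.le)
    rw [hg]
    simp only [intervalIntegral.integral_const_mul]
    rw [intervalIntegral.integral_add i1 i2, hI1, hI2, hq]
    have hβ1 : β / (β + 1) = 1 / (p + 1) := by
      rw [hpdef]; field_simp
      ring
    rw [hβ1]
    have hp1 : p + 1 ≠ 0 := by positivity
    field_simp
    ring
  rw [← hgcalc]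
  exact hmono
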